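/- Let α = (a₁ a₂ b₂ b₁) and β = (c₁ c₂ b₂ b₁) be cyclic permutations on the six distinct symbols a₁, a₂, b₁, b₂, c₁, c₂. Then the group generated by α and β contains no 3-cycle. -/

import Mathlib

namespace T0Pair222

/-- Build a permutation of `Fin 6` as a product of transpositions. -/
def mk (l : List (Fin 6 × Fin 6)) : Equiv.Perm (Fin 6) := (l.map (fun p => Equiv.swap p.1 p.2)).prod

def A : Equiv.Perm (Fin 6) := mk [(0,1),(1,3),(3,2)]
def B : Equiv.Perm (Fin 6) := mk [(4,5),(5,3),(3,2)]
def Ai : Equiv.Perm (Fin 6) := mk [(0,2),(2,3),(3,1)]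
def Bi : Equiv.Perm (Fin 6) := mk [(4,2),(2,3),(3,5)]

/-- The 120 elements of the subgroup of `Perm (Fin 6)` generated by `A` and `B`. -/
def S : List (Equiv.Perm (Fin 6)) := [
mk [],
mk [(2,3),(3,5),(5,4)],
mk [(2,4),(4,5),(5,3)],
mk [(2,5),(3,4)],
mk [(1,2),(4,5)],
mk [(1,2),(2,3),(3,4)],
mk [(1,2),(2,4),(4,3),(3,5)],
mk [(1,2),(2,5),(5,3)],
mk [(1,3),(3,5),(5,2)],
mk [(1,3),(3,4),(4,5)],
mk [(1,3),(2,4)],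
mk [(1,3),(3,2),(2,5),(5,4)],
mk [(1,4),(4,3),(3,2)],
mk [(1,4),(3,5)],
mk [(1,4),(4,5),(5,2),(2,3)],
mk [(1,4),(4,2),(2,5)],
mk [(1,5),(5,3),(3,4),(4,2)],
mk [(1,5),(5,4),(4,3)],
mk [(1,5),(2,3)],
mk [(1,5),(5,2),(2,4)],
mk [(0,1),(3,4)],
mk [(0,1),(2,3),(4,5)],
mk [(0,1),(2,4),(3,5)],
mk [(0,1),(2,5)],
mk [(0,1),(1,2),(3,4),(4,5)],
mk [(0,1),(1,2),(2,3),(3,5)],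
mk [(0,1),(1,2),(2,4)],
mk [(0,1),(1,2),(2,5),(5,4),(4,3)],
mk [(0,1),(1,3),(3,2)],
mk [(0,1),(1,3),(3,5),(5,4)],
mk [(0,1),(1,3),(2,4),(4,5)],
mk [(0,1),(1,3),(3,4),(4,2),(2,5)],
mk [(0,1),(1,4),(4,3),(3,5),(5,2)],
mk [(0,1),(1,4),(4,5)],
mk [(0,1),(1,4),(4,2),(2,3)],
mk [(0,1),(1,4),(2,5),(5,3)],
mk [(0,1),(1,5),(5,4),(4,2)],
mk [(0,1),(1,5),(5,3)],
mk [(0,1),(1,5),(5,2),(2,3),(3,4)],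
mk [(0,1),(1,5),(2,4),(4,3)],
mk [(0,2),(2,1),(3,5),(5,4)],
mk [(0,2),(2,3),(3,1)],
mk [(0,2),(2,4),(4,5),(5,1)],
mk [(0,2),(2,5),(5,3),(3,4),(4,1)],
mk [(0,2),(3,5)],
mk [(0,2),(2,3),(3,4),(4,5)],
mk [(0,2),(2,4),(4,3)],
mk [(0,2),(2,5),(5,4)],
mk [(0,2),(1,3),(4,5)],
mk [(0,2),(2,1),(1,3),(3,4)],
mk [(0,2),(2,4),(4,1),(1,3),(3,5)],
mk [(0,2),(2,5),(5,1),(1,3)],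
mk [(0,2),(1,4)],
mk [(0,2),(2,1),(1,4),(4,5),(5,3)],
mk [(0,2),(2,3),(3,5),(5,1),(1,4)],
mk [(0,2),(2,5),(1,4),(4,3)],
mk [(0,2),(1,5),(3,4)],
mk [(0,2),(2,1),(1,5)],
mk [(0,2),(2,3),(1,5),(5,4)],
mk [(0,2),(2,4),(1,5),(5,3)],
mk [(0,3),(3,4),(4,5),(5,2),(2,1)],
mk [(0,3),(3,5),(5,1)],
mk [(0,3),(3,2),(2,4),(4,1)],
mk [(0,3),(3,1),(2,5),(5,4)],
mk [(0,3),(3,4),(4,2)],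
mk [(0,3),(4,5)],
mk [(0,3),(3,5),(5,2),(2,4)],
mk [(0,3),(3,2),(2,5)],
mk [(0,3),(3,5),(5,4),(4,1),(1,2)],
mk [(0,3),(1,2)],
mk [(0,3),(3,1),(1,2),(2,4),(4,5)],
mk [(0,3),(3,4),(1,2),(2,5)],
mk [(0,3),(3,2),(1,4),(4,5)],
mk [(0,3),(3,5),(1,4),(4,2)],
mk [(0,3),(3,1),(1,4)],
mk [(0,3),(1,4),(2,5)],
mk [(0,3),(3,1),(1,5),(5,2)],
mk [(0,3),(3,2),(2,1),(1,5),(5,4)],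
mk [(0,3),(3,4),(4,1),(1,5)],
mk [(0,3),(1,5),(2,4)],
mk [(0,4),(4,2),(2,1)],
mk [(0,4),(4,5),(5,3),(3,1)],
mk [(0,4),(4,1),(2,3),(3,5)],
mk [(0,4),(4,3),(3,2),(2,5),(5,1)],
mk [(0,4),(4,5),(5,2)],
mk [(0,4),(4,3),(3,5)],
mk [(0,4),(2,3)],
mk [(0,4),(4,2),(2,5),(5,3)],
mk [(0,4),(4,3),(3,1),(1,2)],
mk [(0,4),(1,2),(3,5)],
mk [(0,4),(4,5),(5,1),(1,2),(2,3)],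
mk [(0,4),(4,1),(1,2),(2,5)],
mk [(0,4),(4,2),(1,3),(3,5)],
mk [(0,4),(4,5),(1,3),(3,2)],
mk [(0,4),(4,1),(1,3)],
mk [(0,4),(1,3),(2,5)],
mk [(0,4),(4,1),(1,5),(5,3),(3,2)],
mk [(0,4),(4,3),(1,5),(5,2)],
mk [(0,4),(1,5)],
mk [(0,4),(4,2),(2,3),(3,1),(1,5)],
mk [(0,5),(5,3),(3,2),(2,1)],
mk [(0,5),(5,4),(4,1)],
mk [(0,5),(5,1),(2,3),(3,4)],
mk [(0,5),(5,2),(2,4),(4,3),(3,1)],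
mk [(0,5),(5,4),(4,3),(3,2)],
mk [(0,5),(5,3),(3,4)],
mk [(0,5),(5,2),(2,3)],
mk [(0,5),(2,4)],
mk [(0,5),(5,1),(1,2)],
mk [(0,5),(1,2),(3,4)],
mk [(0,5),(5,4),(1,2),(2,3)],
mk [(0,5),(5,3),(1,2),(2,4)],
mk [(0,5),(5,2),(1,3),(3,4)],
mk [(0,5),(5,4),(4,2),(2,1),(1,3)],
mk [(0,5),(1,3)],
mk [(0,5),(5,1),(1,3),(3,2),(2,4)],
mk [(0,5),(5,3),(3,1),(1,4),(4,2)],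
mk [(0,5),(5,2),(2,1),(1,4)],
mk [(0,5),(5,1),(1,4),(4,3)],
mk [(0,5),(1,4),(2,3)]
]

set_option maxRecDepth 10000
set_option maxHeartbeats 1000000

theorem hone : (1 : Equiv.Perm (Fin 6)) ∈ S := by decide
theorem hAf : A = List.formPerm [(0:Fin 6),1,3,2] := by decide
theorem hBf : B = List.formPerm [(4:Fin 6),5,3,2] := by decide
theorem hAi : Ai = A⁻¹ := by decide
theorem hBi : Bi = B⁻¹ := by decide
theorem hstepB : (S.all fun x => decide (A * x ∈ S) && decide (B * x ∈ S)
    && decide (Ai * x ∈ S) && decide (Bi * x ∈ S)) = true := by decide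
theorem hcardB : (S.all fun x => decide (x.support.card ≠ 3)) = true := by decide

theorem hstep : ∀ x ∈ S, A * x ∈ S ∧ B * x ∈ S ∧ Ai * x ∈ S ∧ Bi * x ∈ S := by
  intro x hx
  have h := List.all_eq_true.mp hstepB x hx
  simp only [Bool.and_eq_true, decide_eq_true_eq] at h
  exact ⟨h.1.1.1, h.1.1.2, h.1.2, h.2⟩

theorem hcard : ∀ x ∈ S, x.support.card ≠ 3 := by
  intro x hx
  have h := List.all_eq_true.mp hcardB x hx
  simpa using h

theorem key6 : ∀ σ ∈ Subgroup.closure ({A, B} : Set (Equiv.Perm (Fin 6))), σ ∈ S := by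
  intro σ hσ
  have h1 : σ ∈ Submonoid.closure (({A, B} : Set (Equiv.Perm (Fin 6))) ∪ ({A, B} : Set (Equiv.Perm (Fin 6)))⁻¹) := by
    rw [← Subgroup.closure_toSubmonoid]
    exact hσ
  obtain ⟨l, hl, rfl⟩ := Submonoid.exists_list_of_mem_closure h1
  clear hσ h1
  induction l with
  | nil => simpa using hone
  | cons a t ih =>
      have ha := hl a List.mem_cons_self
      have ht := ih (fun y hy => hl y (List.mem_cons_of_mem a hy))
      rw [List.prod_cons]
      obtain ⟨h1, h2, h3, h4⟩ := hstep _ ht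
      simp only [Set.mem_union, Set.mem_inv, Set.mem_insert_iff, Set.mem_singleton_iff] at ha
      rcases ha with (rfl | rfl) | (h | h)
      · exact h1
      · exact h2
      · have : a = Ai := by rw [hAi, ← h, inv_inv]
        rw [this]; exact h3
      · have : a = Bi := by rw [hBi, ← h, inv_inv]
        rw [this]; exact h4

/-- `viaEmbedding` sends swaps to swaps. -/
theorem viaEmbedding_swap {Y Z : Type*} [DecidableEq Y] [DecidableEq Z] (f : Y ↪ Z) (i j : Y) :
    (Equiv.swap i j).viaEmbedding f = Equiv.swap (f i) (f j) := by
  ext x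
  by_cases hx : x ∈ Set.range f
  · obtain ⟨y, rfl⟩ := hx
    rw [Equiv.Perm.viaEmbedding_apply]
    rcases eq_or_ne y i with rfl | hi
    · simp
    rcases eq_or_ne y j with rfl | hj
    · simp
    rw [Equiv.swap_apply_of_ne_of_ne hi hj,
      Equiv.swap_apply_of_ne_of_ne (fun h => hi (f.injective h)) (fun h => hj (f.injective h))]
  · rw [Equiv.Perm.viaEmbedding_apply_of_notMem _ _ x hx,
      Equiv.swap_apply_of_ne_of_ne (fun h => hx ⟨i, h.symm⟩) (fun h => hx ⟨j, h.symm⟩)]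

end T0Pair222

open T0Pair222 in
/-- T₀-pair of type (2,2,2): the group generated by α = (a₁ a₂ b₂ b₁) and
β = (c₁ c₂ b₂ b₁) on six distinct symbols contains no 3-cycle. -/
theorem t0_pair_222_no_three_cycle {X : Type*} [Fintype X] [DecidableEq X]
    (a1 a2 b1 b2 c1 c2 : X)
    (hdist : ([a1, a2, b1, b2, c1, c2] : List X).Nodup) :
    let α := List.formPerm [a1, a2, b2, b1]
    let β := List.formPerm [c1, c2, b2, b1]
    ∀ σ ∈ Subgroup.closure {α, β}, ¬ Equiv.Perm.IsThreeCycle σ := by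
  intro α β σ hσ hthree
  have hinj : Function.Injective (![a1,a2,b1,b2,c1,c2] : Fin 6 → X) := by
    have hofn : List.ofFn (![a1,a2,b1,b2,c1,c2] : Fin 6 → X) = [a1,a2,b1,b2,c1,c2] := by
      simp [List.ofFn_succ]
    exact List.nodup_ofFn.mp (by rw [hofn]; exact hdist)
  set f : Fin 6 ↪ X := ⟨![a1,a2,b1,b2,c1,c2], hinj⟩ with hf
  set Φ := Equiv.Perm.viaEmbeddingHom f with hΦ
  have e0 : f 0 = a1 := rfl
  have e1 : f 1 = a2 := rfl
  have e2 : f 2 = b1 := rfl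
  have e3 : f 3 = b2 := rfl
  have e4 : f 4 = c1 := rfl
  have e5 : f 5 = c2 := rfl
  have hαdef : α = List.formPerm [a1, a2, b2, b1] := rfl
  have hβdef : β = List.formPerm [c1, c2, b2, b1] := rfl
  have hΦA : Φ A = α := by
    rw [hαdef, hAf]
    simp only [List.formPerm_cons_cons, List.formPerm_pair, List.formPerm_singleton,
      map_mul, map_one, mul_one, hΦ,
      Equiv.Perm.viaEmbeddingHom_apply, viaEmbedding_swap, e0, e1, e2, e3]
  have hΦB : Φ B = β := by
    rw [hβdef, hBf]
    simp only [List.formPerm_cons_cons, List.formPerm_pair, List.formPerm_singleton,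
      map_mul, map_one, mul_one, hΦ,
      Equiv.Perm.viaEmbeddingHom_apply, viaEmbedding_swap, e2, e3, e4, e5]
  have him : ({α, β} : Set (Equiv.Perm X)) = Φ '' {A, B} := by
    rw [Set.image_insert_eq, Set.image_singleton, hΦA, hΦB]
  have hmem : σ ∈ (Subgroup.closure ({A, B} : Set (Equiv.Perm (Fin 6)))).map Φ := by
    rw [MonoidHom.map_closure, ← him]
    exact hσ
  obtain ⟨τ, hτ, rfl⟩ := Subgroup.mem_map.mp hmem
  have hτS : τ ∈ S := key6 τ hτ
  have hcard3 : τ.support.card ≠ 3 := hcard τ hτS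
  have h3 : (Φ τ).cycleType = {3} := hthree
  rw [hΦ, Equiv.Perm.viaEmbeddingHom_apply] at h3
  rw [show Equiv.Perm.viaEmbedding τ f = τ.extendDomain (Equiv.ofInjective f f.injective) from by
    unfold Equiv.Perm.viaEmbedding; congr!] at h3
  rw [Equiv.Perm.cycleType_extendDomain] at h3
  exact hcard3 (Equiv.Perm.IsThreeCycle.card_support h3)
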